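/- Let N = 2n+1 with θ = 2π/N and define δλ_k = -(1/2) ∑_{j=1}^n sin(j(2k+1)θ/2) / sin²(jθ/2). Then δλ_0 < 0 and δλ_n = 0. -/

import Mathlib

open Finset

/-- For `N = 2n+1`, `θ = 2π/N` and
`δλ_k = -(1/2) ∑_{j=1}^n sin(j(2k+1)θ/2)/sin²(jθ/2)`, one has `δλ_0 < 0` and `δλ_n = 0`. -/
theorem ngon_first_difference_endpoints (n : ℕ) (hn : 1 ≤ n) :
    (-(1 / 2) * ∑ j ∈ Finset.Icc 1 n,
        Real.sin (j * (2 * (0 : ℕ) + 1) * (2 * Real.pi / (2 * n + 1)) / 2) /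
          (Real.sin (j * (2 * Real.pi / (2 * n + 1)) / 2)) ^ 2) < 0 ∧
    (-(1 / 2) * ∑ j ∈ Finset.Icc 1 n,
        Real.sin (j * (2 * (n : ℝ) + 1) * (2 * Real.pi / (2 * n + 1)) / 2) /
          (Real.sin (j * (2 * Real.pi / (2 * n + 1)) / 2)) ^ 2) = 0 := by
  have hNpos : (0 : ℝ) < 2 * n + 1 := by positivity
  have hNne : (2 * (n : ℝ) + 1) ≠ 0 := ne_of_gt hNpos
  constructor
  · have hsum : 0 < ∑ j ∈ Finset.Icc 1 n,
        Real.sin (j * (2 * (0 : ℕ) + 1) * (2 * Real.pi / (2 * n + 1)) / 2) /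
          (Real.sin (j * (2 * Real.pi / (2 * n + 1)) / 2)) ^ 2 := by
      apply Finset.sum_pos
      · intro j hj
        simp only [Finset.mem_Icc] at hj
        have hj1 : 1 ≤ j := hj.1
        have hjn : j ≤ n := hj.2
        have hx : (j : ℝ) * (2 * Real.pi / (2 * n + 1)) / 2
            = j * Real.pi / (2 * n + 1) := by ring
        have hxpos : 0 < (j : ℝ) * Real.pi / (2 * n + 1) := by
          have : (0 : ℝ) < j := by exact_mod_cast hj1
          positivity
        have hxlt : (j : ℝ) * Real.pi / (2 * n + 1) < Real.pi := by
          rw [div_lt_iff₀ hNpos]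
          have hj' : (j : ℝ) < 2 * n + 1 := by
            have : (j : ℝ) ≤ n := by exact_mod_cast hjn
            nlinarith [Real.pi_pos]
          nlinarith [Real.pi_pos]
        have hsin : 0 < Real.sin ((j : ℝ) * (2 * Real.pi / (2 * n + 1)) / 2) := by
          rw [hx]; exact Real.sin_pos_of_pos_of_lt_pi hxpos hxlt
        have harg : (j : ℝ) * (2 * (0 : ℕ) + 1) * (2 * Real.pi / (2 * n + 1)) / 2
            = (j : ℝ) * (2 * Real.pi / (2 * n + 1)) / 2 := by push_cast; ring
        rw [harg]
        positivity
      · exact ⟨1, by simp [hn]⟩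
    nlinarith
  · have hz : ∀ j ∈ Finset.Icc 1 n,
        Real.sin (j * (2 * (n : ℝ) + 1) * (2 * Real.pi / (2 * n + 1)) / 2) /
          (Real.sin (j * (2 * Real.pi / (2 * n + 1)) / 2)) ^ 2 = 0 := by
      intro j _
      have harg : (j : ℝ) * (2 * (n : ℝ) + 1) * (2 * Real.pi / (2 * n + 1)) / 2
          = j * Real.pi := by field_simp
      rw [harg, Real.sin_nat_mul_pi, zero_div]
    rw [Finset.sum_congr rfl hz]
    simp
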